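/- arXiv:1708.00510 — 2 statements merged into one kernel-verified Lean document; each statement's English description precedes it below -/
import Mathlib

section
/- Let G=(V,E) be a finite undirected graph with maximum degree at most d, and let r : V → [0,1] assign to each vertex an independent uniformly random value in [0,1]. Then for every vertex v ∈ V, the expected size of the query tree of v satisfies E[|T_v|] ≤ e^d. -/
open MeasureTheory Real
open scoped ENNReal

namespace QueryTreeAux

noncomputable def mu0 : Measure ℝ := (volume : Measure ℝ).restrict (Set.Icc 0 1)

instance : IsProbabilityMeasure mu0 :=
  ⟨by simp [mu0, Real.volume_Icc]⟩

variable {V : Type*}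

lemma measurableSet_chain (l : List V) :
    MeasurableSet {r : V → ℝ | l.Chain' (fun a b => r b ≤ r a)} := by
  induction l with
  | nil => simp [List.Chain']
  | cons a l ih =>
    cases l with
    | nil => simp [List.Chain']
    | cons b l' =>
      have h : {r : V → ℝ | (a :: b :: l').Chain' (fun a b => r b ≤ r a)}
          = {r : V → ℝ | r b ≤ r a} ∩ {r : V → ℝ | (b :: l').Chain' (fun a b => r b ≤ r a)} := by
        ext r; simp [List.Chain', List.isChain_cons_cons, Set.mem_setOf_eq]
      rw [h]
      exact (measurableSet_le (measurable_pi_apply b) (measurable_pi_apply a)).inter ih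

lemma measurableSet_event (l : List V) (t : ℝ) :
    MeasurableSet {r : V → ℝ | l.Chain' (fun a b => r b ≤ r a) ∧ ∀ u ∈ l.head?, r u ≤ t} := by
  have h : {r : V → ℝ | l.Chain' (fun a b => r b ≤ r a) ∧ ∀ u ∈ l.head?, r u ≤ t}
      = {r : V → ℝ | l.Chain' (fun a b => r b ≤ r a)} ∩ {r : V → ℝ | ∀ u ∈ l.head?, r u ≤ t} := rfl
  rw [h]
  refine (measurableSet_chain l).inter ?_
  cases l with
  | nil => simp
  | cons a l' =>
    have h2 : {r : V → ℝ | ∀ u ∈ (a :: l').head?, r u ≤ t} = {r : V → ℝ | r a ≤ t} := by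
      ext r; simp
    rw [h2]
    exact measurableSet_le (measurable_pi_apply a) measurable_const

lemma chain'_update_of_not_mem [DecidableEq V] {u : V} (r : V → ℝ) (y : ℝ) :
    ∀ {l : List V}, u ∉ l →
      ((l.Chain' fun a b => Function.update r u y b ≤ Function.update r u y a) ↔
        l.Chain' (fun a b => r b ≤ r a)) := by
  intro l
  induction l with
  | nil => simp [List.Chain']
  | cons a l ih =>
    intro hul
    have ha : Function.update r u y a = r a :=
      by rw [Function.update_of_ne]; rintro rfl; exact hul List.mem_cons_self
    cases l with
    | nil => simp [List.Chain']
    | cons b l' =>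
      have hul' : u ∉ b :: l' := fun h => hul (List.mem_cons_of_mem _ h)
      have hb : Function.update r u y b = r b :=
        by rw [Function.update_of_ne]; rintro rfl; exact hul' List.mem_cons_self
      unfold List.Chain' at ih ⊢
      rw [List.isChain_cons_cons, List.isChain_cons_cons, ha, hb, ih hul']

lemma lmarginal_const' [DecidableEq V] (c : ℝ≥0∞) (s : Finset V) (x : V → ℝ) :
    (∫⋯∫⁻_s, (fun _ => c) ∂(fun _ : V => mu0)) x = c := by
  simp [lmarginal, lintegral_const]

theorem lmarginal_chain [DecidableEq V] :
    ∀ (l : List V), l.Nodup → ∀ t ∈ Set.Icc (0:ℝ) 1, ∀ x : V → ℝ,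
    (∫⋯∫⁻_l.toFinset,
        Set.indicator {r : V → ℝ | l.Chain' (fun a b => r b ≤ r a) ∧ ∀ u ∈ l.head?, r u ≤ t}
          (1 : (V → ℝ) → ℝ≥0∞) ∂(fun _ : V => mu0)) x
      = ENNReal.ofReal (t ^ l.length / (Nat.factorial l.length : ℝ)) := by
  intro l
  induction l with
  | nil =>
    intro _ t ht x
    simp [List.Chain']
  | cons u l ih =>
    intro hl t ht x
    have hu : u ∉ l.toFinset := by simpa using (List.nodup_cons.mp hl).1
    have hul : u ∉ l := (List.nodup_cons.mp hl).1
    have hl' : l.Nodup := (List.nodup_cons.mp hl).2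
    have hmeas : Measurable (Set.indicator
        {r : V → ℝ | (u :: l).Chain' (fun a b => r b ≤ r a) ∧ ∀ w ∈ (u :: l).head?, r w ≤ t}
        (1 : (V → ℝ) → ℝ≥0∞)) :=
      measurable_const.indicator (measurableSet_event _ t)
    rw [List.toFinset_cons, lmarginal_insert _ hmeas hu]
    have key : ∀ y ∈ Set.Icc (0:ℝ) 1,
        (∫⋯∫⁻_l.toFinset,
            Set.indicator {r : V → ℝ | (u :: l).Chain' (fun a b => r b ≤ r a) ∧
              ∀ w ∈ (u :: l).head?, r w ≤ t} (1 : (V → ℝ) → ℝ≥0∞) ∂(fun _ : V => mu0))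
          (Function.update x u y)
        = if y ≤ t then ENNReal.ofReal (y ^ l.length / (Nat.factorial l.length : ℝ)) else 0 := by
      intro y hy
      rw [lmarginal_update_of_notMem hmeas hu]
      by_cases hyt : y ≤ t
      · have hfun : (Set.indicator {r : V → ℝ | (u :: l).Chain' (fun a b => r b ≤ r a) ∧
              ∀ w ∈ (u :: l).head?, r w ≤ t} (1 : (V → ℝ) → ℝ≥0∞)) ∘ (Function.update · u y)
            = Set.indicator {r : V → ℝ | l.Chain' (fun a b => r b ≤ r a) ∧
              ∀ w ∈ l.head?, r w ≤ y} (1 : (V → ℝ) → ℝ≥0∞) := by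
          funext r
          have hiff : (Function.update r u y ∈
              {r : V → ℝ | (u :: l).Chain' (fun a b => r b ≤ r a) ∧
                ∀ w ∈ (u :: l).head?, r w ≤ t})
              ↔ (r ∈ {r : V → ℝ | l.Chain' (fun a b => r b ≤ r a) ∧
                ∀ w ∈ l.head?, r w ≤ y}) := by
            simp only [Set.mem_setOf_eq, List.Chain', List.isChain_cons, List.head?_cons,
              Option.mem_def, Option.some.injEq]
            constructor
            · rintro ⟨⟨hhead, hchain⟩, hut⟩
              refine ⟨(chain'_update_of_not_mem r y hul).mp hchain, ?_⟩
              intro w hw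
              have hwl : w ∈ l := List.mem_of_mem_head? hw
              have := hhead w hw
              rwa [Function.update_self, Function.update_of_ne (fun h => hul (by rw [← h]; exact hwl)) _ _] at this
            · rintro ⟨hchain, hhead⟩
              refine ⟨⟨?_, (chain'_update_of_not_mem r y hul).mpr hchain⟩, ?_⟩
              · intro w hw
                have hwl : w ∈ l := List.mem_of_mem_head? hw
                rw [Function.update_self, Function.update_of_ne (fun h => hul (by rw [← h]; exact hwl)) _ _]
                exact hhead w hw
              · intro w hw
                cases hw
                rw [Function.update_self]
                exact hyt
          classical
          simp only [Function.comp_apply, Set.indicator_apply, Pi.one_apply]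
          rw [if_congr hiff rfl rfl]
        rw [hfun, if_pos hyt]
        exact ih hl' y hy x
      · have hfun : (Set.indicator {r : V → ℝ | (u :: l).Chain' (fun a b => r b ≤ r a) ∧
              ∀ w ∈ (u :: l).head?, r w ≤ t} (1 : (V → ℝ) → ℝ≥0∞)) ∘ (Function.update · u y)
            = (fun _ => (0:ℝ≥0∞)) := by
          funext r
          simp only [Function.comp_apply]
          apply Set.indicator_of_notMem
          rintro ⟨-, hhead⟩
          have := hhead u (by simp)
          rw [Function.update_self] at this
          exact hyt this
        rw [hfun, if_neg hyt, lmarginal_const']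
    have hres : (∫⁻ y, (∫⋯∫⁻_l.toFinset,
        Set.indicator {r : V → ℝ | (u :: l).Chain' (fun a b => r b ≤ r a) ∧
          ∀ w ∈ (u :: l).head?, r w ≤ t} (1 : (V → ℝ) → ℝ≥0∞) ∂(fun _ : V => mu0))
        (Function.update x u y) ∂mu0)
        = ∫⁻ y in Set.Icc (0:ℝ) 1,
            (if y ≤ t then ENNReal.ofReal (y ^ l.length / (Nat.factorial l.length : ℝ)) else 0) ∂volume := by
      rw [show mu0 = (volume : Measure ℝ).restrict (Set.Icc 0 1) from rfl]
      exact setLIntegral_congr_fun measurableSet_Icc key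
    rw [hres]
    have hind : ∀ y : ℝ, (if y ≤ t then ENNReal.ofReal (y ^ l.length / (Nat.factorial l.length : ℝ)) else 0)
        = (Set.Iic t).indicator (fun y => ENNReal.ofReal (y ^ l.length / (Nat.factorial l.length : ℝ))) y := by
      intro y; simp [Set.indicator_apply, Set.mem_Iic]
    simp_rw [hind]
    rw [lintegral_indicator measurableSet_Iic, Measure.restrict_restrict measurableSet_Iic]
    have hset : Set.Iic t ∩ Set.Icc (0:ℝ) 1 = Set.Icc 0 t := by
      ext y
      simp only [Set.mem_inter_iff, Set.mem_Iic, Set.mem_Icc]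
      constructor
      · rintro ⟨h1, h2, h3⟩; exact ⟨h2, h1⟩
      · rintro ⟨h1, h2⟩; exact ⟨h2, h1, h2.trans ht.2⟩
    rw [hset]
    have hint : IntegrableOn (fun y : ℝ => y ^ l.length / (Nat.factorial l.length : ℝ)) (Set.Icc 0 t) volume :=
      ((continuous_pow l.length).div_const _).integrableOn_Icc
    have hnn : 0 ≤ᵐ[volume.restrict (Set.Icc (0:ℝ) t)] fun y : ℝ => y ^ l.length / (Nat.factorial l.length : ℝ) := by
      refine (ae_restrict_iff' measurableSet_Icc).mpr (ae_of_all _ fun y hy => ?_)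
      have : (0:ℝ) ≤ y := hy.1
      positivity
    rw [← ofReal_integral_eq_lintegral_ofReal hint hnn]
    congr 1
    rw [MeasureTheory.integral_Icc_eq_integral_Ioc, ← intervalIntegral.integral_of_le ht.1,
      intervalIntegral.integral_div, integral_pow]
    have h0 : (0:ℝ) ^ (l.length + 1) = 0 := by simp
    rw [h0, sub_zero, List.length_cons, Nat.factorial_succ]
    push_cast
    rw [div_div]

lemma measure_chain_le [DecidableEq V] [Fintype V] (a : V) (l : List V) (hl : (a :: l).Nodup) :
    Measure.pi (fun _ : V => mu0) {r : V → ℝ | (a :: l).Chain' (fun a b => r b ≤ r a)}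
      ≤ ENNReal.ofReal (1 / (Nat.factorial (a :: l).length : ℝ)) := by
  have hsub : {r : V → ℝ | (a :: l).Chain' (fun a b => r b ≤ r a)}
      ⊆ {r : V → ℝ | (a :: l).Chain' (fun a b => r b ≤ r a) ∧ ∀ w ∈ (a :: l).head?, r w ≤ 1}
        ∪ {r : V → ℝ | 1 < r a} := by
    intro r hr
    by_cases h : r a ≤ 1
    · left
      refine ⟨hr, ?_⟩
      intro w hw
      simp only [List.head?_cons, Option.mem_def, Option.some.injEq] at hw
      cases hw
      exact h
    · right
      exact lt_of_not_ge h
  refine le_trans (measure_mono hsub) (le_trans (measure_union_le _ _) ?_)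
  have h2 : Measure.pi (fun _ : V => mu0) {r : V → ℝ | 1 < r a} = 0 := by
    have hset : {r : V → ℝ | 1 < r a}
        = Set.pi Set.univ (Function.update (fun _ : V => (Set.univ : Set ℝ)) a (Set.Ioi 1)) := by
      ext r
      simp only [Set.mem_setOf_eq, Set.mem_pi, Set.mem_univ, forall_true_left]
      constructor
      · intro h i
        rcases eq_or_ne i a with rfl | hia
        · rw [Function.update_self]; exact h
        · rw [Function.update_of_ne hia]; trivial
      · intro h
        have := h a
        rwa [Function.update_self] at this
    rw [hset, Measure.pi_pi]
    refine Finset.prod_eq_zero (Finset.mem_univ a) ?_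
    rw [Function.update_self]
    show mu0 (Set.Ioi 1) = 0
    rw [show mu0 = (volume : Measure ℝ).restrict (Set.Icc 0 1) from rfl,
      Measure.restrict_apply measurableSet_Ioi]
    have : Set.Ioi (1:ℝ) ∩ Set.Icc 0 1 = ∅ := by
      ext y
      simp only [Set.mem_inter_iff, Set.mem_Ioi, Set.mem_Icc, Set.mem_empty_iff_false, iff_false]
      rintro ⟨h1, -, h3⟩
      linarith
    rw [this, measure_empty]
  rw [h2, add_zero]
  have hmeas : Measurable (Set.indicator
      {r : V → ℝ | (a :: l).Chain' (fun a b => r b ≤ r a) ∧ ∀ w ∈ (a :: l).head?, r w ≤ 1}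
      (1 : (V → ℝ) → ℝ≥0∞)) :=
    measurable_const.indicator (measurableSet_event (a :: l) 1)
  rw [← lintegral_indicator_one (measurableSet_event (a :: l) 1),
    lintegral_eq_lmarginal_univ (fun _ : V => (0:ℝ))]
  rw [lmarginal_eq_of_subset (Finset.subset_univ (a :: l).toFinset) hmeas
    (measurable_const (a := ENNReal.ofReal (1 / (Nat.factorial (a :: l).length : ℝ)))) ?_]
  · rw [lmarginal_const']
  · funext x
    rw [lmarginal_chain (a :: l) hl 1 (by norm_num) x, lmarginal_const', one_pow]

variable [DecidableEq V] [Inhabited V]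

def walkLists (G : SimpleGraph V) [DecidableRel G.Adj] [∀ x : V, Fintype (G.neighborSet x)]
    (v : V) : ℕ → Finset (List V)
  | 0 => {[v]}
  | (k+1) => (walkLists G v k).biUnion
      (fun l => (G.neighborFinset l.headI).image (fun w => w :: l))

lemma walkLists_card {G : SimpleGraph V} [DecidableRel G.Adj] [∀ x : V, Fintype (G.neighborSet x)]
    {v : V} {d : ℕ} (hd : ∀ x : V, (G.neighborFinset x).card ≤ d) (k : ℕ) :
    (walkLists G v k).card ≤ d ^ k := by
  induction k with
  | zero => simp [walkLists]
  | succ k ih =>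
    calc (walkLists G v (k+1)).card
        ≤ ∑ l ∈ walkLists G v k, ((G.neighborFinset l.headI).image (fun w => w :: l)).card :=
          Finset.card_biUnion_le
      _ ≤ ∑ _l ∈ walkLists G v k, d := by
          refine Finset.sum_le_sum fun l _ => ?_
          exact le_trans Finset.card_image_le (hd _)
      _ = (walkLists G v k).card * d := by rw [Finset.sum_const, smul_eq_mul]
      _ ≤ d ^ k * d := Nat.mul_le_mul_right d ih
      _ = d ^ (k+1) := by ring

lemma walkLists_length {G : SimpleGraph V} [DecidableRel G.Adj]
    [∀ x : V, Fintype (G.neighborSet x)] {v : V} :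
    ∀ k, ∀ l ∈ walkLists G v k, l.length = k + 1 := by
  intro k
  induction k with
  | zero =>
    intro l hl
    simp only [walkLists, Finset.mem_singleton] at hl
    simp [hl]
  | succ k ih =>
    intro l hl
    simp only [walkLists, Finset.mem_biUnion, Finset.mem_image] at hl
    obtain ⟨l', hl', w, -, rfl⟩ := hl
    simp [ih l' hl']

lemma walk_support_mem_walkLists {G : SimpleGraph V} [DecidableRel G.Adj]
    [∀ x : V, Fintype (G.neighborSet x)] {v : V} :
    ∀ {u : V} (p : G.Walk u v), p.support ∈ walkLists G v p.length := by
  intro u p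
  induction p with
  | nil => simp [walkLists]
  | @cons u w _ h q ih =>
    have hhead : q.support.headI = w := by
      rw [q.support_eq_cons]
      rfl
    simp only [SimpleGraph.Walk.support_cons, SimpleGraph.Walk.length_cons, walkLists,
      Finset.mem_biUnion, Finset.mem_image]
    exact ⟨q.support, ih, u, by rw [hhead]; simpa using h.symm, rfl⟩

lemma chain_of_darts {G : SimpleGraph V} (r : V → ℝ) :
    ∀ {a b : V} (p : G.Walk a b), (∀ d ∈ p.darts, r d.toProd.2 ≤ r d.toProd.1) →
      p.support.Chain' (fun x y => r y ≤ r x) := by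
  intro a b p
  induction p with
  | nil => simp [List.Chain']
  | @cons a w _ h q ih =>
    intro hd
    rw [SimpleGraph.Walk.support_cons]
    unfold List.Chain'
    rw [List.isChain_cons]
    constructor
    · intro z hz
      rw [q.support_eq_cons] at hz
      simp only [List.head?_cons, Option.mem_def, Option.some.injEq] at hz
      cases hz
      exact hd ⟨(a, w), h⟩ (by simp)
    · exact ih fun d hdm => hd d (by simp [hdm])

lemma exists_walk {G : SimpleGraph V} (r : V → ℝ) {v u : V}
    (h : Relation.ReflTransGen (fun a b => G.Adj a b ∧ r a ≤ r b) v u) :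
    ∃ p : G.Walk v u, ∀ d ∈ p.darts, r d.toProd.1 ≤ r d.toProd.2 := by
  induction h using Relation.ReflTransGen.head_induction_on with
  | refl => exact ⟨SimpleGraph.Walk.nil, by simp⟩
  | head hac _ ih =>
    obtain ⟨p, hp⟩ := ih
    refine ⟨SimpleGraph.Walk.cons hac.1 p, ?_⟩
    intro d hd
    simp only [SimpleGraph.Walk.darts_cons, List.mem_cons] at hd
    rcases hd with rfl | hd
    · exact hac.2
    · exact hp d hd

lemma reachable_headI {G : SimpleGraph V} [DecidableRel G.Adj]
    [∀ x : V, Fintype (G.neighborSet x)] [Fintype V] (r : V → ℝ) {v u : V}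
    (h : Relation.ReflTransGen (fun a b => G.Adj a b ∧ r a ≤ r b) v u) :
    ∃ k < Fintype.card V, ∃ l ∈ walkLists G v k,
      l.Nodup ∧ l.Chain' (fun a b => r b ≤ r a) ∧ l.headI = u := by
  obtain ⟨p, hp⟩ := exists_walk r h
  set q : G.Walk u v := p.bypass.reverse with hq
  refine ⟨q.length, ?_, q.support, walk_support_mem_walkLists q, ?_, ?_, ?_⟩
  · rw [hq, SimpleGraph.Walk.length_reverse]
    exact p.bypass_isPath.length_lt
  · rw [hq, SimpleGraph.Walk.support_reverse]
    exact List.nodup_reverse.mpr p.bypass_isPath.support_nodup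
  · refine chain_of_darts r q ?_
    intro d hd
    rw [hq, SimpleGraph.Walk.darts_reverse, List.mem_reverse, List.mem_map] at hd
    obtain ⟨e, he, rfl⟩ := hd
    have he' : e ∈ p.darts := p.darts_bypass_subset he
    simpa using hp e he'
  · rw [q.support_eq_cons]
    rfl

instance : IsProbabilityMeasure ((volume : Measure ℝ).restrict (Set.Icc (0:ℝ) 1)) :=
  ⟨by simp [Real.volume_Icc]⟩

end QueryTreeAux

open QueryTreeAux

/-- For a graph `G` with max degree at most `d` and vertex ranks
i.i.d. uniform on `[0,1]`, the expected size of the query tree of any vertex `v`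
is at most `e^d`. -/
theorem query_tree_expected_size {V : Type*} [Fintype V]
    (G : SimpleGraph V) [DecidableRel G.Adj] (d : ℕ)
    (hd : ∀ v : V, G.degree v ≤ d) (v : V) :
    ∫ r : V → ℝ,
        (({u : V | Relation.ReflTransGen (fun a b => G.Adj a b ∧ r a ≤ r b) v u}).ncard : ℝ)
        ∂(Measure.pi (fun _ : V => (volume : Measure ℝ).restrict (Set.Icc 0 1)))
      ≤ Real.exp d := by
  classical
  haveI : Inhabited V := ⟨v⟩
  set μ : Measure (V → ℝ) :=
    Measure.pi (fun _ : V => (volume : Measure ℝ).restrict (Set.Icc 0 1)) with hμ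
  have hμ0 : μ = Measure.pi (fun _ : V => mu0) := rfl
  set n := Fintype.card V with hn
  have hdeg : ∀ x : V, (G.neighborFinset x).card ≤ d := fun x => by
    rw [SimpleGraph.card_neighborFinset_eq_degree]; exact hd x
  set W : ℕ → Finset (List V) := fun k => (walkLists G v k).filter (fun l => l.Nodup) with hW
  set g : (V → ℝ) → ℝ := fun r => ∑ k ∈ Finset.range n, ∑ l ∈ W k,
      Set.indicator {r' : V → ℝ | l.Chain' (fun a b => r' b ≤ r' a)} (fun _ => (1:ℝ)) r with hg
  have hterm : ∀ (k : ℕ) (l : List V), Integrable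
      (Set.indicator {r' : V → ℝ | l.Chain' (fun a b => r' b ≤ r' a)} (fun _ => (1:ℝ))) μ :=
    fun k l => (integrable_const (1:ℝ)).indicator (measurableSet_chain l)
  have hgint : Integrable g μ := by
    rw [hg]
    exact integrable_finset_sum _ fun k _ => integrable_finset_sum _ fun l _ => hterm k l
  have hpoint : ∀ r : V → ℝ,
      (({u : V | Relation.ReflTransGen (fun a b => G.Adj a b ∧ r a ≤ r b) v u}).ncard : ℝ)
        ≤ g r := by
    intro r
    set S : Finset V := (Finset.range n).biUnion (fun k =>
      ((W k).filter (fun l => l.Chain' (fun a b => r b ≤ r a))).image List.headI) with hS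
    have hsub : {u : V | Relation.ReflTransGen (fun a b => G.Adj a b ∧ r a ≤ r b) v u}
        ⊆ ↑S := by
      intro u hu
      obtain ⟨k, hk, l, hl, hnd, hch, hhead⟩ := reachable_headI r hu
      refine Finset.mem_coe.mpr (Finset.mem_biUnion.mpr ⟨k, Finset.mem_range.mpr hk, ?_⟩)
      exact Finset.mem_image.mpr
        ⟨l, Finset.mem_filter.mpr ⟨Finset.mem_filter.mpr ⟨hl, hnd⟩, hch⟩, hhead⟩
    have h1 : ({u : V | Relation.ReflTransGen (fun a b => G.Adj a b ∧ r a ≤ r b) v u}).ncard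
        ≤ S.card := by
      have := Set.ncard_le_ncard hsub S.finite_toSet
      rwa [Set.ncard_coe_finset] at this
    have h2 : S.card ≤ ∑ k ∈ Finset.range n,
        ((W k).filter (fun l => l.Chain' (fun a b => r b ≤ r a))).card :=
      le_trans Finset.card_biUnion_le (Finset.sum_le_sum fun k _ => Finset.card_image_le)
    have h3 : g r = ∑ k ∈ Finset.range n,
        ((((W k).filter (fun l => l.Chain' (fun a b => r b ≤ r a))).card : ℕ) : ℝ) := by
      rw [hg]
      refine Finset.sum_congr rfl fun k _ => ?_
      rw [Finset.card_filter]
      push_cast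
      refine Finset.sum_congr rfl fun l _ => ?_
      simp [Set.indicator_apply]
    rw [h3]
    exact_mod_cast le_trans h1 h2
  have hIg : ∫ r, g r ∂μ ≤ Real.exp d := by
    have hInt : ∫ r, g r ∂μ = ∑ k ∈ Finset.range n, ∑ l ∈ W k,
        (μ {r' : V → ℝ | l.Chain' (fun a b => r' b ≤ r' a)}).toReal := by
      rw [hg, integral_finset_sum _ fun k _ => integrable_finset_sum _ fun l _ => hterm k l]
      refine Finset.sum_congr rfl fun k _ => ?_
      rw [integral_finset_sum _ fun l _ => hterm k l]
      refine Finset.sum_congr rfl fun l _ => ?_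
      rw [integral_indicator_const (1:ℝ) (measurableSet_chain l)]
      simp
      rfl
    rw [hInt]
    have hbound : ∀ k ∈ Finset.range n, ∑ l ∈ W k,
        (μ {r' : V → ℝ | l.Chain' (fun a b => r' b ≤ r' a)}).toReal
          ≤ (d:ℝ) ^ k * (1 / (Nat.factorial (k+1) : ℝ)) := by
      intro k _
      have hl1 : ∀ l ∈ W k,
          (μ {r' : V → ℝ | l.Chain' (fun a b => r' b ≤ r' a)}).toReal
            ≤ 1 / (Nat.factorial (k+1) : ℝ) := by
        intro l hl
        rw [hW, Finset.mem_filter] at hl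
        obtain ⟨hlw, hnd⟩ := hl
        have hlen : l.length = k + 1 := walkLists_length k l hlw
        cases l with
        | nil => simp at hlen
        | cons a l' =>
          have hle := measure_chain_le a l' hnd
          rw [← hμ0] at hle
          rw [hlen] at hle
          exact ENNReal.toReal_le_of_le_ofReal (by positivity) hle
      calc ∑ l ∈ W k, (μ {r' : V → ℝ | l.Chain' (fun a b => r' b ≤ r' a)}).toReal
          ≤ ∑ _l ∈ W k, (1 / (Nat.factorial (k+1) : ℝ)) := Finset.sum_le_sum hl1
        _ = (W k).card * (1 / (Nat.factorial (k+1) : ℝ)) := by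
            rw [Finset.sum_const, nsmul_eq_mul]
        _ ≤ ((d:ℝ) ^ k) * (1 / (Nat.factorial (k+1) : ℝ)) := by
            have hcard : (W k).card ≤ d ^ k :=
              le_trans (Finset.card_filter_le _ _) (walkLists_card hdeg k)
            have : ((W k).card : ℝ) ≤ (d:ℝ) ^ k := by exact_mod_cast hcard
            exact mul_le_mul_of_nonneg_right this (by positivity)
    calc ∑ k ∈ Finset.range n, ∑ l ∈ W k,
          (μ {r' : V → ℝ | l.Chain' (fun a b => r' b ≤ r' a)}).toReal
        ≤ ∑ k ∈ Finset.range n, (d:ℝ) ^ k * (1 / (Nat.factorial (k+1) : ℝ)) :=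
          Finset.sum_le_sum hbound
      _ ≤ ∑ k ∈ Finset.range n, (d:ℝ) ^ k / (Nat.factorial k : ℝ) := by
          refine Finset.sum_le_sum fun k _ => ?_
          rw [mul_one_div]
          gcongr
          omega
      _ ≤ Real.exp d := Real.sum_le_exp_of_nonneg (by positivity) n
  by_cases hfint : Integrable
      (fun r : V → ℝ =>
        (({u : V | Relation.ReflTransGen (fun a b => G.Adj a b ∧ r a ≤ r b) v u}).ncard : ℝ)) μ
  · exact le_trans (integral_mono hfint hgint hpoint) hIg
  · rw [integral_undef hfint]
    positivity
end

section
/- Let G=(V,E) be a finite undirected graph with maximum degree at most d, let v ∈ V, and let r : V → [0,1] assign to each vertex an independent uniformly random value in [0,1]. Then for every integer k ≥ 0, the expected number of monotone paths of length k starting at v (paths v = u_0, ..., u_k of distinct vertices with r(u_0) ≤ r(u_1) ≤ ... ≤ r(u_k)) is at most d^k/(k+1)!. -/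
open MeasureTheory Real Set
open scoped ENNReal

namespace MonotonePathsAux

noncomputable def nu : Measure ℝ := (volume : Measure ℝ).restrict (Set.Icc 0 1)

lemma nu_univ : nu Set.univ = 1 := by
  simp [nu, Real.volume_Icc]

instance : IsProbabilityMeasure nu := ⟨nu_univ⟩
instance : NullSingletonClass nu := by unfold nu; infer_instance

noncomputable def muV (V : Type*) [Fintype V] : Measure (V → ℝ) :=
  Measure.pi fun _ => nu

instance (V : Type*) [Fintype V] : IsProbabilityMeasure (muV V) := by
  unfold muV; infer_instance

variable {V : Type*} [Fintype V]

lemma ties_null (a b : V) (hab : a ≠ b) : muV V {r : V → ℝ | r a = r b} = 0 := by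
  classical
  set p : V → Prop := fun i => i = a with hp
  have hpm := measurePreserving_piEquivPiSubtypeProd (fun _ : V => nu) p
  set e := MeasurableEquiv.piEquivPiSubtypeProd (fun _ : V => ℝ) p
  have hb : ¬ p b := fun h => hab h.symm
  set T : (({i // p i} → ℝ) × ({i // ¬ p i} → ℝ)) → Prop :=
    fun z => z.1 ⟨a, rfl⟩ = z.2 ⟨b, hb⟩ with hT
  have hTm : MeasurableSet {z | T z} := by
    apply measurableSet_eq_fun
    · exact (measurable_pi_apply _).comp measurable_fst
    · exact (measurable_pi_apply _).comp measurable_snd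
  have hpre : {r : V → ℝ | r a = r b} = e ⁻¹' {z | T z} := rfl
  rw [hpre]
  unfold muV
  rw [hpm.measure_preimage hTm.nullMeasurableSet]
  rw [Measure.prod_apply hTm]
  have : ∀ x : {i // p i} → ℝ,
      (Measure.pi fun _ : {i // ¬ p i} => nu) (Prod.mk x ⁻¹' {z | T z}) = 0 := by
    intro x
    have : (Prod.mk x ⁻¹' {z | T z}) = {y : {i // ¬ p i} → ℝ | y ⟨b, hb⟩ = x ⟨a, rfl⟩} := by
      ext y; simp [hT, eq_comm]
    rw [this]
    exact Measure.pi_hyperplane _ _ _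
  have h0 : ∀ x : {i // p i} → ℝ,
      (Measure.pi fun _ : {i // ¬ p i} => nu) {a | T (x, a)} = 0 := this
  exact (lintegral_congr h0).trans lintegral_zero

lemma perm_measurePreserving (g : Equiv.Perm V) :
    MeasurePreserving (fun r : V → ℝ => r ∘ g) (muV V) (muV V) := by
  have h := measurePreserving_piCongrLeft (fun _ : V => nu) g.symm
  have he : ⇑(MeasurableEquiv.piCongrLeft (fun _ : V => ℝ) g.symm)
      = fun r : V → ℝ => r ∘ g := by
    funext r i
    have h2 := Equiv.piCongrLeft_apply_apply (fun _ : V => ℝ) g.symm r (g i)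
    rw [Equiv.symm_apply_apply] at h2
    show (MeasurableEquiv.piCongrLeft (fun _ : V => ℝ) g.symm) r i = (r ∘ g) i
    rw [MeasurableEquiv.coe_piCongrLeft]
    exact h2
  unfold muV
  rw [← he]
  exact h

lemma monotone_prob_le (n : ℕ) (u : Fin n → V) (hu : Function.Injective u) :
    muV V {r : V → ℝ | Monotone (r ∘ u)} ≤ 1 / (Nat.factorial n : ℝ≥0∞) := by
  classical
  set B : Equiv.Perm (Fin n) → Set (V → ℝ) :=
    fun σ => {r | StrictMono (r ∘ u ∘ σ)} with hB
  have hBm : ∀ σ, MeasurableSet (B σ) := by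
    intro σ
    have hEq : B σ = ⋂ (i : Fin n) (j : Fin n) (_ : i < j),
        {r : V → ℝ | r (u (σ i)) < r (u (σ j))} := by
      ext r
      simp only [hB, Set.mem_iInter, Set.mem_setOf_eq]
      exact ⟨fun h i j hij => h hij, fun h a b hab => h a b hab⟩
    rw [hEq]
    exact MeasurableSet.iInter fun i => MeasurableSet.iInter fun j =>
      MeasurableSet.iInter fun _ =>
        measurableSet_lt (measurable_pi_apply _) (measurable_pi_apply _)
  have hBeq : ∀ σ, muV V (B σ) = muV V (B 1) := by
    intro σ
    set g := σ.viaEmbedding ⟨u, hu⟩ with hg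
    have hpre : B σ = (fun r : V → ℝ => r ∘ g) ⁻¹' (B 1) := by
      ext r
      show StrictMono (r ∘ u ∘ ⇑σ) ↔ StrictMono ((r ∘ ⇑g) ∘ u ∘ ⇑(1 : Equiv.Perm (Fin n)))
      have hfun : (r ∘ ⇑g) ∘ u ∘ ⇑(1 : Equiv.Perm (Fin n)) = r ∘ u ∘ ⇑σ := by
        funext i
        simp only [Function.comp_apply, Equiv.Perm.coe_one, id_eq]
        exact congrArg r (σ.viaEmbedding_apply ⟨u, hu⟩ i)
      rw [hfun]
    rw [hpre]
    exact (perm_measurePreserving g).measure_preimage (hBm 1).nullMeasurableSet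
  have hdisj : Set.PairwiseDisjoint (↑(Finset.univ : Finset (Equiv.Perm (Fin n)))) B := by
    intro σ _ τ _ hst
    refine Set.disjoint_left.mpr fun {r} hσ hτ => hst ?_
    have hσ' : StrictMono (r ∘ u ∘ ⇑σ) := hσ
    have hτ' : StrictMono (r ∘ u ∘ ⇑τ) := hτ
    have hinj : Function.Injective (r ∘ u) := by
      intro x y hxy
      have h1 : (σ.symm x) = (σ.symm y) := hσ'.injective (by
        simp only [Function.comp_apply, Equiv.apply_symm_apply]
        exact hxy)
      calc x = σ (σ.symm x) := (σ.apply_symm_apply x).symm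
        _ = σ (σ.symm y) := congrArg σ h1
        _ = y := σ.apply_symm_apply y
    have heqc : (r ∘ u) ∘ ⇑σ = (r ∘ u) ∘ ⇑τ :=
      Tuple.unique_monotone hσ'.monotone hτ'.monotone
    exact Equiv.ext fun i => hinj (congrFun heqc i)
  have hsum : (Fintype.card (Equiv.Perm (Fin n)) : ℝ≥0∞) * muV V (B 1) ≤ 1 := by
    have h1 : ∑ σ : Equiv.Perm (Fin n), muV V (B σ)
        = (Fintype.card (Equiv.Perm (Fin n)) : ℝ≥0∞) * muV V (B 1) := by
      simp [hBeq, Finset.sum_const, Finset.card_univ, nsmul_eq_mul]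
    rw [← h1, ← measure_biUnion_finset hdisj (fun σ _ => hBm σ)]
    exact prob_le_one
  have hfactsum : (Nat.factorial n : ℝ≥0∞) * muV V (B 1) ≤ 1 := by
    rwa [Fintype.card_perm, Fintype.card_fin] at hsum
  have hB1le : muV V (B 1) ≤ 1 / (Nat.factorial n : ℝ≥0∞) := by
    rw [ENNReal.le_div_iff_mul_le (Or.inl (by exact_mod_cast Nat.factorial_ne_zero n))
      (Or.inl (ENNReal.natCast_ne_top _))]
    rwa [mul_comm]
  set N : Set (V → ℝ) := ⋃ (p : Fin n × Fin n) (_ : p.1 ≠ p.2),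
    {r : V → ℝ | r (u p.1) = r (u p.2)} with hN
  have hNnull : muV V N = 0 := by
    refine measure_iUnion_null fun p => ?_
    by_cases hp : p.1 = p.2
    · simp [hp]
    · rw [Set.iUnion_eq_if, if_pos hp]
      exact ties_null (u p.1) (u p.2) (fun h => hp (hu h))
  have hsubset : {r : V → ℝ | Monotone (r ∘ u)} ⊆ B 1 ∪ N := by
    intro r hr
    by_cases hinj : Function.Injective (r ∘ u)
    · left
      show StrictMono (r ∘ u ∘ ⇑(1 : Equiv.Perm (Fin n)))
      have := (hr : Monotone (r ∘ u)).strictMono_of_injective hinj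
      simpa [Function.comp_def] using this
    · right
      simp only [Function.Injective, not_forall] at hinj
      obtain ⟨x, y, hxy, hne⟩ := hinj
      exact Set.mem_iUnion.mpr ⟨(x, y), Set.mem_iUnion.mpr ⟨fun h => hne h, hxy⟩⟩
  calc muV V {r : V → ℝ | Monotone (r ∘ u)} ≤ muV V (B 1 ∪ N) := measure_mono hsubset
    _ ≤ muV V (B 1) + muV V N := measure_union_le _ _
    _ = muV V (B 1) := by rw [hNnull, add_zero]
    _ ≤ 1 / (Nat.factorial n : ℝ≥0∞) := hB1le

variable {V : Type*} [Fintype V] [DecidableEq V]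

set_option maxHeartbeats 1000000 in
lemma count_paths (G : SimpleGraph V) [DecidableRel G.Adj] (d : ℕ)
    (hd : ∀ v : V, G.degree v ≤ d) (v : V) (k : ℕ) :
    (Finset.univ.filter (fun u : Fin (k+1) → V =>
      u 0 = v ∧ ∀ j : Fin k, G.Adj (u j.castSucc) (u j.succ))).card ≤ d ^ k := by
  induction k with
  | zero =>
    rw [pow_zero]
    refine Finset.card_le_one.mpr fun a ha b hb => ?_
    simp only [Finset.mem_filter] at ha hb
    funext i
    have hi : i = 0 := Fin.ext (by omega)
    rw [hi, ha.2.1, hb.2.1]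
  | succ k ih =>
    have hsub : (Finset.univ.filter (fun u : Fin (k+2) → V =>
        u 0 = v ∧ ∀ j : Fin (k+1), G.Adj (u j.castSucc) (u j.succ))) ⊆
        (Finset.univ.filter (fun u : Fin (k+1) → V =>
          u 0 = v ∧ ∀ j : Fin k, G.Adj (u j.castSucc) (u j.succ))).biUnion
          (fun u' => (G.neighborFinset (u' (Fin.last k))).image (fun w => (Fin.snoc u' w : Fin (k+2) → V))) := by
      intro u hu
      simp only [Finset.mem_filter, Finset.mem_univ, true_and] at hu
      rw [Finset.mem_biUnion]
      refine ⟨fun i => u i.castSucc, ?_, ?_⟩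
      · simp only [Finset.mem_filter, Finset.mem_univ, true_and]
        refine ⟨by rw [Fin.castSucc_zero]; exact hu.1, fun j => ?_⟩
        have := hu.2 j.castSucc
        rwa [Fin.succ_castSucc] at this
      · rw [Finset.mem_image]
        refine ⟨u (Fin.last (k+1)), ?_, ?_⟩
        · rw [SimpleGraph.mem_neighborFinset]
          have := hu.2 (Fin.last k)
          rwa [Fin.succ_last] at this
        · funext i
          refine Fin.lastCases ?_ (fun j => ?_) i
          · rw [Fin.snoc_last]
          · rw [Fin.snoc_castSucc]
    have h1 := Finset.card_le_card hsub
    have h2 : ((Finset.univ.filter (fun u : Fin (k+1) → V =>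
          u 0 = v ∧ ∀ j : Fin k, G.Adj (u j.castSucc) (u j.succ))).biUnion
          (fun u' => (G.neighborFinset (u' (Fin.last k))).image (fun w => (Fin.snoc u' w : Fin (k+2) → V)))).card
        ≤ ∑ u' ∈ (Finset.univ.filter (fun u : Fin (k+1) → V =>
          u 0 = v ∧ ∀ j : Fin k, G.Adj (u j.castSucc) (u j.succ))),
          ((G.neighborFinset (u' (Fin.last k))).image (fun w => (Fin.snoc u' w : Fin (k+2) → V))).card :=
      Finset.card_biUnion_le
    have h3 : ∑ u' ∈ (Finset.univ.filter (fun u : Fin (k+1) → V =>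
          u 0 = v ∧ ∀ j : Fin k, G.Adj (u j.castSucc) (u j.succ))),
          ((G.neighborFinset (u' (Fin.last k))).image (fun w => (Fin.snoc u' w : Fin (k+2) → V))).card
        ≤ ∑ _u' ∈ (Finset.univ.filter (fun u : Fin (k+1) → V =>
          u 0 = v ∧ ∀ j : Fin k, G.Adj (u j.castSucc) (u j.succ))), d :=
      Finset.sum_le_sum fun u' _ => le_trans (Finset.card_image_le) (hd _)
    have h4 : ∑ _u' ∈ (Finset.univ.filter (fun u : Fin (k+1) → V =>
          u 0 = v ∧ ∀ j : Fin k, G.Adj (u j.castSucc) (u j.succ))), d ≤ d ^ k * d := by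
      rw [Finset.sum_const, smul_eq_mul]
      exact Nat.mul_le_mul_right d ih
    rw [pow_succ]
    exact le_trans h1 (le_trans h2 (le_trans h3 h4))


end MonotonePathsAux

open MonotonePathsAux in
/-- In a graph with maximum degree at most `d`, with vertex ranks
i.i.d. uniform on `[0,1]`, the expected number of monotone paths of length `k`
starting at a vertex `v` is at most `d^k / (k+1)!`. -/
theorem expected_monotone_paths {V : Type*} [Fintype V] (G : SimpleGraph V)
    [DecidableRel G.Adj] (d : ℕ) (hd : ∀ v : V, G.degree v ≤ d) (v : V) (k : ℕ) :
    ∫ r : V → ℝ,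
        (({u : Fin (k + 1) → V | Function.Injective u ∧ u 0 = v ∧
            (∀ j : Fin k, G.Adj (u j.castSucc) (u j.succ)) ∧
            (∀ j : Fin k, r (u j.castSucc) ≤ r (u j.succ))}).ncard : ℝ)
        ∂(Measure.pi (fun _ : V => (volume : Measure ℝ).restrict (Set.Icc 0 1)))
      ≤ (d : ℝ) ^ k / (Nat.factorial (k + 1) : ℝ) := by
  classical
  rw [show (Measure.pi fun _ : V => (volume : Measure ℝ).restrict (Set.Icc 0 1))
      = muV V from rfl]
  set P : (V → ℝ) → (Fin (k + 1) → V) → Prop := fun r u =>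
    Function.Injective u ∧ u 0 = v ∧
      (∀ j : Fin k, G.Adj (u j.castSucc) (u j.succ)) ∧
      (∀ j : Fin k, r (u j.castSucc) ≤ r (u j.succ)) with hP
  set C : (Fin (k + 1) → V) → Prop := fun u =>
    Function.Injective u ∧ u 0 = v ∧
      (∀ j : Fin k, G.Adj (u j.castSucc) (u j.succ)) with hC
  -- pointwise: ncard as a sum of indicators
  have hpt : ∀ r : V → ℝ,
      (({u : Fin (k + 1) → V | Function.Injective u ∧ u 0 = v ∧
            (∀ j : Fin k, G.Adj (u j.castSucc) (u j.succ)) ∧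
            (∀ j : Fin k, r (u j.castSucc) ≤ r (u j.succ))}).ncard : ℝ)
      = ∑ u : Fin (k + 1) → V, (if P r u then (1 : ℝ) else 0) := by
    intro r
    have h1 : {u : Fin (k + 1) → V | Function.Injective u ∧ u 0 = v ∧
            (∀ j : Fin k, G.Adj (u j.castSucc) (u j.succ)) ∧
            (∀ j : Fin k, r (u j.castSucc) ≤ r (u j.succ))}
        = ↑(Finset.univ.filter (P r)) := by
      ext u
      simp [hP]
    rw [h1, Set.ncard_coe_finset, Finset.card_filter]
    push_cast
    rfl
  rw [integral_congr_ae (Filter.Eventually.of_forall hpt)]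
  -- measurability of the "monotone" sets
  have hEm : ∀ u : Fin (k + 1) → V,
      MeasurableSet {r : V → ℝ | ∀ j : Fin k, r (u j.castSucc) ≤ r (u j.succ)} := by
    intro u
    have h2 : {r : V → ℝ | ∀ j : Fin k, r (u j.castSucc) ≤ r (u j.succ)}
        = ⋂ j : Fin k, {r : V → ℝ | r (u j.castSucc) ≤ r (u j.succ)} := by
      ext r; simp
    rw [h2]
    exact MeasurableSet.iInter fun j =>
      measurableSet_le (measurable_pi_apply _) (measurable_pi_apply _)
  -- the key probability bound
  have hkey : ∀ u : Fin (k + 1) → V, Function.Injective u →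
      muV V {r : V → ℝ | ∀ j : Fin k, r (u j.castSucc) ≤ r (u j.succ)}
        ≤ 1 / ((Nat.factorial (k + 1) : ℝ≥0∞)) := by
    intro u hu
    have hE : {r : V → ℝ | ∀ j : Fin k, r (u j.castSucc) ≤ r (u j.succ)}
        = {r : V → ℝ | Monotone (r ∘ u)} := by
      ext r
      simp only [Set.mem_setOf_eq]
      rw [Fin.monotone_iff_le_succ]
      exact Iff.rfl
    rw [hE]
    exact monotone_prob_le (k + 1) u hu
  -- per-u integrability and bound
  have hInt : ∀ u : Fin (k + 1) → V,
      Integrable (fun r : V → ℝ => if P r u then (1 : ℝ) else 0) (muV V) ∧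
      ∫ r : V → ℝ, (if P r u then (1 : ℝ) else 0) ∂(muV V)
        ≤ (if C u then (1 / (Nat.factorial (k + 1) : ℝ)) else 0) := by
    intro u
    by_cases hCu : C u
    · have hs : {r : V → ℝ | P r u}
          = {r : V → ℝ | ∀ j : Fin k, r (u j.castSucc) ≤ r (u j.succ)} := by
        ext r
        simp only [Set.mem_setOf_eq, hP]
        exact ⟨fun h => h.2.2.2, fun h => ⟨hCu.1, hCu.2.1, hCu.2.2, h⟩⟩
      have hm : MeasurableSet {r : V → ℝ | P r u} := hs ▸ hEm u
      have hind : (fun r : V → ℝ => if P r u then (1 : ℝ) else 0)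
          = Set.indicator {r : V → ℝ | P r u} (fun _ => (1 : ℝ)) := by
        funext r
        by_cases h : P r u
        · rw [if_pos h]
          exact (Set.indicator_of_mem (show r ∈ {r' : V → ℝ | P r' u} from h)
            fun _ => (1 : ℝ)).symm
        · rw [if_neg h]
          exact (Set.indicator_of_notMem (show r ∉ {r' : V → ℝ | P r' u} from h)
            fun _ => (1 : ℝ)).symm
      constructor
      · rw [hind]
        exact (integrable_indicator_iff hm).2
          (integrableOn_const (measure_ne_top _ _))
      · rw [hind, integral_indicator_const (1 : ℝ) hm, if_pos hCu, smul_eq_mul, mul_one]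
        have h1 : muV V {r : V → ℝ | P r u} ≤ 1 / (Nat.factorial (k + 1) : ℝ≥0∞) := by
          rw [hs]
          exact hkey u hCu.1
        have h2 := ENNReal.toReal_mono (by
          simp [ENNReal.div_eq_top, Nat.factorial_ne_zero]) h1
        rwa [ENNReal.toReal_div, ENNReal.toReal_one, ENNReal.toReal_natCast] at h2
    · have hz : (fun r : V → ℝ => if P r u then (1 : ℝ) else 0) = fun _ => (0 : ℝ) := by
        funext r
        exact if_neg fun h => hCu ⟨h.1, h.2.1, h.2.2.1⟩
      rw [hz, if_neg hCu]
      exact ⟨integrable_zero _ _ _, by rw [integral_zero]⟩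
  rw [integral_finset_sum _ (fun u _ => (hInt u).1)]
  have hsum : ∑ u : Fin (k + 1) → V, ∫ r : V → ℝ, (if P r u then (1 : ℝ) else 0) ∂(muV V)
      ≤ ∑ u : Fin (k + 1) → V, (if C u then (1 / (Nat.factorial (k + 1) : ℝ)) else 0) :=
    Finset.sum_le_sum fun u _ => (hInt u).2
  refine le_trans hsum ?_
  rw [← Finset.sum_filter]
  rw [Finset.sum_const, nsmul_eq_mul]
  -- count paths
  have hcount : (Finset.univ.filter C).card ≤ d ^ k := by
    refine le_trans (Finset.card_le_card ?_) (count_paths G d hd v k)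
    intro u hu
    simp only [Finset.mem_filter, Finset.mem_univ, true_and, hC] at hu ⊢
    exact hu.2
  have hnn : (0 : ℝ) ≤ 1 / (Nat.factorial (k + 1) : ℝ) := by positivity
  calc ((Finset.univ.filter C).card : ℝ) * (1 / (Nat.factorial (k + 1) : ℝ))
      ≤ ((d : ℝ) ^ k) * (1 / (Nat.factorial (k + 1) : ℝ)) := by
        refine mul_le_mul_of_nonneg_right ?_ hnn
        exact_mod_cast hcount
    _ = (d : ℝ) ^ k / (Nat.factorial (k + 1) : ℝ) := mul_one_div _ _
end
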